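/- arXiv:1709.04528 — 4 statements merged into one kernel-verified Lean document; each statement's English description precedes it below -/
import Mathlib

section
/- Izzo's contraction mapping principle: Let (X, d) be a metric space and (Qₐ)ₐ∈ℕ a sequence of maps on X for which there exists c < 1 with d(Qₐ(x), Qₐ(y)) ≤ c·d(x, y) for all x, y ∈ X and a ∈ ℕ. Suppose there exists x∞ ∈ X with lim_{a→∞} Qₐ(x∞) = x∞. Let x₀ ∈ X be arbitrary and define xₐ recursively by x_{a+1} = Qₐ(xₐ). Then lim_{a→∞} xₐ = x∞. -/
open Filter Topology

/-- Izzo's contraction mapping principle.  Let `(X, d)` be a metric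
space and `(Qₐ)` a sequence of maps on `X`, all contractions with a common
constant `c < 1`.  If `Qₐ(x∞) → x∞` for some point `x∞`, then for any `x₀` the
recursively defined sequence `x_{a+1} = Qₐ(xₐ)` converges to `x∞`. -/
theorem izzo_contraction
    (X : Type*) [MetricSpace X]
    (Q : ℕ → X → X) (c : ℝ) (hc : c < 1)
    (hQ : ∀ (a : ℕ) (x y : X), dist (Q a x) (Q a y) ≤ c * dist x y)
    (xinf : X) (hfix : Tendsto (fun a => Q a xinf) atTop (𝓝 xinf))
    (x : ℕ → X) (hrec : ∀ a : ℕ, x (a + 1) = Q a (x a)) :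
    Tendsto x atTop (𝓝 xinf) := by
  set c' : ℝ := max c 0 with hc'
  have hc0 : 0 ≤ c' := le_max_right _ _
  have hc1 : c' < 1 := max_lt hc one_pos
  set u : ℕ → ℝ := fun a => dist (x a) xinf with hu
  have key : ∀ a, u (a + 1) ≤ c' * u a + dist (Q a xinf) xinf := by
    intro a
    calc u (a + 1) = dist (Q a (x a)) xinf := by rw [hu]; simp [hrec a]
      _ ≤ dist (Q a (x a)) (Q a xinf) + dist (Q a xinf) xinf := dist_triangle _ _ _
      _ ≤ c * u a + dist (Q a xinf) xinf := add_le_add_left (hQ a _ _) _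
      _ ≤ c' * u a + dist (Q a xinf) xinf :=
          add_le_add_left (mul_le_mul_of_nonneg_right (le_max_left _ _) dist_nonneg) _
  rw [tendsto_iff_dist_tendsto_zero, Metric.tendsto_atTop]
  intro ε hε
  have hε' : 0 < (1 - c') * ε / 2 := by
    have : 0 < 1 - c' := by linarith
    positivity
  obtain ⟨N, hN⟩ := Metric.tendsto_atTop.1 hfix _ hε'
  have ind : ∀ k, u (N + k) ≤ c' ^ k * u N + ε / 2 := by
    intro k
    induction k with
    | zero => simp; positivity
    | succ k ih =>
      have h2 : dist (Q (N + k) xinf) xinf < (1 - c') * ε / 2 := by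
        exact hN (N + k) (Nat.le_add_right _ _)
      calc u (N + (k + 1)) = u (N + k + 1) := by rw [Nat.add_succ]
        _ ≤ c' * u (N + k) + dist (Q (N + k) xinf) xinf := key _
        _ ≤ c' * (c' ^ k * u N + ε / 2) + (1 - c') * ε / 2 :=
            add_le_add (mul_le_mul_of_nonneg_left ih hc0) h2.le
        _ = c' ^ (k + 1) * u N + ε / 2 := by ring
  have hpow : Tendsto (fun k => c' ^ k * u N) atTop (𝓝 0) := by
    have := tendsto_pow_atTop_nhds_zero_of_lt_one hc0 hc1
    simpa using this.mul_const (u N)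
  obtain ⟨K, hK⟩ := Metric.tendsto_atTop.1 hpow _ (half_pos hε)
  refine ⟨N + K, fun n hn => ?_⟩
  have hk : n = N + (n - N) := by omega
  have hKle : K ≤ n - N := by omega
  have h1 := ind (n - N)
  have h2 := hK (n - N) hKle
  rw [Real.dist_eq, sub_zero] at h2 ⊢
  have hun : 0 ≤ u n := dist_nonneg
  rw [abs_of_nonneg hun]
  have hnn : 0 ≤ c' ^ (n - N) * u N := by positivity
  rw [abs_of_nonneg hnn] at h2
  calc u n = u (N + (n - N)) := by rw [← hk]
    _ ≤ c' ^ (n - N) * u N + ε / 2 := h1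
    _ < ε / 2 + ε / 2 := by linarith
    _ = ε := by ring
end

section
/- Uniqueness for the canonical-coordinates ODE: let C ∈ C(B^n(η); 𝕄^{n×n}) with C(0) = 0 and ‖C(x)‖ ≤ D|x| for all x ∈ B^n(η), where η ≤ (10D)⁻¹. If A₁, A₂ ∈ C(B^n(η); 𝕄^{n×n}) both satisfy (d/dr)(r A(rθ)) = −A(rθ)² − C(rθ)A(rθ) − C(rθ) for all θ ∈ S^{n−1} and r ∈ (0, η), with A₁(0) = A₂(0) = 0, then A₁ = A₂. -/
open Metric

set_option maxHeartbeats 1000000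
set_option synthInstance.maxHeartbeats 400000

section Aux

private lemma ode_diff_eq {R : Type*} [Ring R] (a₁ a₂ c : R) :
    (-(a₁*a₁) - c*a₁ - c) - (-(a₂*a₂) - c*a₂ - c)
      = -(a₁*(a₁-a₂)) - (a₁-a₂)*a₂ - c*(a₁-a₂) := by noncomm_ring

private lemma Dη_le {η D : ℝ} (hD : 0 < D) (hηD : η ≤ (10 * D)⁻¹) : D * η ≤ 1/10 := by
  have : D * η ≤ D * (10 * D)⁻¹ := by nlinarith
  have h2 : D * (10 * D)⁻¹ = 1/10 := by field_simp
  linarith [h2 ▸ this]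

/-- A priori linear bound `‖A(rθ)‖ ≤ K r` along a ray. -/
private lemma ode_linear_bound {n : ℕ} {η D : ℝ} (hη : 0 < η) (hD : 0 < D)
    (hηD : η ≤ (10 * D)⁻¹)
    {C A : EuclideanSpace ℝ (Fin n) →
      (EuclideanSpace ℝ (Fin n) →L[ℝ] EuclideanSpace ℝ (Fin n))}
    (hCcont : ContinuousOn C (ball 0 η))
    (hCbound : ∀ x ∈ ball (0 : EuclideanSpace ℝ (Fin n)) η, ‖C x‖ ≤ D * ‖x‖)
    (hAcont : ContinuousOn A (ball 0 η)) (hA0 : A 0 = 0)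
    (hAode : ∀ θ : EuclideanSpace ℝ (Fin n), ‖θ‖ = 1 → ∀ r ∈ Set.Ioo (0:ℝ) η,
        HasDerivAt (fun ρ : ℝ => ρ • A (ρ • θ))
          (-(A (r • θ) * A (r • θ)) - C (r • θ) * A (r • θ) - C (r • θ)) r)
    {θ : EuclideanSpace ℝ (Fin n)} (hθ : ‖θ‖ = 1) {b : ℝ} (hb0 : 0 < b) (hbη : b < η) :
    ∃ K, 0 ≤ K ∧ ∀ r ∈ Set.Icc (0:ℝ) b, ‖A (r • θ)‖ ≤ K * r := by
  have hnorm : ∀ r : ℝ, 0 ≤ r → ‖r • θ‖ = r := by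
    intro r hr
    rw [norm_smul, hθ, mul_one, Real.norm_eq_abs, abs_of_nonneg hr]
  have hmem : ∀ r : ℝ, 0 ≤ r → r < η → r • θ ∈ ball (0 : EuclideanSpace ℝ (Fin n)) η := by
    intro r hr hrη
    rw [mem_ball_zero_iff, hnorm r hr]; exact hrη
  have hmaps : Set.MapsTo (fun r : ℝ => r • θ) (Set.Icc 0 b)
      (ball (0 : EuclideanSpace ℝ (Fin n)) η) :=
    fun r hr => hmem r hr.1 (lt_of_le_of_lt hr.2 hbη)
  have hsmulc : Continuous (fun r : ℝ => r • θ) := continuous_id.smul continuous_const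
  have contA : ContinuousOn (fun r : ℝ => A (r • θ)) (Set.Icc 0 b) :=
    hAcont.comp hsmulc.continuousOn hmaps
  have contC : ContinuousOn (fun r : ℝ => C (r • θ)) (Set.Icc 0 b) :=
    hCcont.comp hsmulc.continuousOn hmaps
  -- choose r₀ so that ‖A(sθ)‖ ≤ 1/2 on [0, r₀]
  have htend : Filter.Tendsto (fun s : ℝ => ‖A (s • θ)‖) (nhdsWithin 0 (Set.Icc 0 b))
      (nhds 0) := by
    have h0 : (0:ℝ) ∈ Set.Icc (0:ℝ) b := ⟨le_refl 0, hb0.le⟩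
    have h00 : A ((0:ℝ) • θ) = 0 := by rw [zero_smul, hA0]
    simpa only [ContinuousWithinAt, h00, norm_zero] using (contA 0 h0).norm
  have hev : ∀ᶠ s in nhdsWithin 0 (Set.Icc (0:ℝ) b), ‖A (s • θ)‖ < 1/2 :=
    htend.eventually_lt_const (by norm_num)
  obtain ⟨ε, hε, hball⟩ := Metric.mem_nhdsWithin_iff.1 hev
  set r₀ : ℝ := min (ε/2) b with hr₀def
  have hr₀0 : 0 < r₀ := lt_min (by linarith) hb0
  have hr₀b : r₀ ≤ b := min_le_right _ _
  have hsmall : ∀ s ∈ Set.Icc (0:ℝ) r₀, ‖A (s • θ)‖ ≤ 1/2 := by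
    intro s hs
    have h1 : s ∈ ball (0:ℝ) ε := by
      rw [mem_ball, Real.dist_eq, sub_zero, abs_of_nonneg hs.1]
      have : s ≤ ε/2 := le_trans hs.2 (min_le_left _ _)
      linarith
    exact (hball ⟨h1, ⟨hs.1, le_trans hs.2 hr₀b⟩⟩).le
  -- FTC
  set F : ℝ → (EuclideanSpace ℝ (Fin n) →L[ℝ] EuclideanSpace ℝ (Fin n)) :=
    fun σ => -(A (σ • θ) * A (σ • θ)) - C (σ • θ) * A (σ • θ) - C (σ • θ) with hFdef
  have contF : ContinuousOn F (Set.Icc 0 b) :=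
    (((contA.mul contA).neg.sub (contC.mul contA)).sub contC)
  have ftc : ∀ s ∈ Set.Icc (0:ℝ) b, s • A (s • θ) = ∫ σ in (0:ℝ)..s, F σ := by
    intro s hs
    have hsub : Set.Icc (0:ℝ) s ⊆ Set.Icc 0 b := Set.Icc_subset_Icc le_rfl hs.2
    have hint : IntervalIntegrable F MeasureTheory.volume 0 s :=
      (contF.mono (by rwa [Set.uIcc_of_le hs.1])).intervalIntegrable
    have hfc : ContinuousOn (fun ρ : ℝ => ρ • A (ρ • θ)) (Set.Icc 0 s) :=
      continuousOn_id.smul (contA.mono hsub)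
    have hderiv : ∀ x ∈ Set.Ioo (0:ℝ) s, HasDerivWithinAt (fun ρ : ℝ => ρ • A (ρ • θ))
        (F x) (Set.Ioi x) x := by
      intro x hx
      exact (hAode θ hθ x ⟨hx.1, lt_of_lt_of_le hx.2 (le_of_lt (lt_of_le_of_lt hs.2 hbη))⟩
        ).hasDerivWithinAt
    have h := intervalIntegral.integral_eq_sub_of_hasDeriv_right_of_le hs.1 hfc hderiv hint
    have z : (0:ℝ) • A ((0:ℝ) • θ) = 0 := zero_smul ℝ (A ((0:ℝ) • θ))
    rw [h, z, sub_zero]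
  -- small-range linear bound
  have slin : ∀ r ∈ Set.Icc (0:ℝ) r₀, ‖A (r • θ)‖ ≤ 2 * D * r := by
    intro r hr
    have hrb : r ≤ b := le_trans hr.2 hr₀b
    obtain ⟨s₁, hs₁mem, hs₁max⟩ :=
      (isCompact_Icc : IsCompact (Set.Icc (0:ℝ) r)).exists_isMaxOn ⟨0, le_refl 0, hr.1⟩
        ((contA.mono (Set.Icc_subset_Icc le_rfl hrb)).norm)
    set M : ℝ := ‖A (s₁ • θ)‖ with hMdef
    have hM0 : 0 ≤ M := norm_nonneg _
    have hMle : ∀ σ ∈ Set.Icc (0:ℝ) r, ‖A (σ • θ)‖ ≤ M := fun σ hσ => hs₁max hσ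
    have hr_self : ‖A (r • θ)‖ ≤ M := hMle r ⟨hr.1, le_refl r⟩
    rcases eq_or_lt_of_le hs₁mem.1 with h0 | h0
    · have hMz : M = 0 := by
        rw [hMdef, ← h0, zero_smul, hA0, norm_zero]
      nlinarith [hr.1, hD.le]
    · -- s₁ > 0
      have hs₁r : s₁ ≤ r := hs₁mem.2
      have hs₁b : s₁ ∈ Set.Icc (0:ℝ) b := ⟨hs₁mem.1, le_trans hs₁r hrb⟩
      have hFbound : ∀ σ ∈ Set.Icc (0:ℝ) s₁, ‖F σ‖ ≤ M^2 + D * (M + 1) * σ := by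
        intro σ hσ
        have hσr : σ ∈ Set.Icc (0:ℝ) r := ⟨hσ.1, le_trans hσ.2 hs₁r⟩
        have ha : ‖A (σ • θ)‖ ≤ M := hMle σ hσr
        have hc : ‖C (σ • θ)‖ ≤ D * σ := by
          have := hCbound (σ • θ) (hmem σ hσ.1 (lt_of_le_of_lt (le_trans hσr.2 hrb) hbη))
          rwa [hnorm σ hσ.1] at this
        have h1 : ‖F σ‖ ≤ ‖A (σ • θ)‖ * ‖A (σ • θ)‖ + ‖C (σ • θ)‖ * ‖A (σ • θ)‖
            + ‖C (σ • θ)‖ := by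
          calc ‖F σ‖ ≤ ‖-(A (σ • θ) * A (σ • θ)) - C (σ • θ) * A (σ • θ)‖ + ‖C (σ • θ)‖ :=
                norm_sub_le _ _
            _ ≤ ‖-(A (σ • θ) * A (σ • θ))‖ + ‖C (σ • θ) * A (σ • θ)‖ + ‖C (σ • θ)‖ := by
                have := norm_sub_le (-(A (σ • θ) * A (σ • θ))) (C (σ • θ) * A (σ • θ))
                linarith
            _ ≤ ‖A (σ • θ)‖ * ‖A (σ • θ)‖ + ‖C (σ • θ)‖ * ‖A (σ • θ)‖ + ‖C (σ • θ)‖ := by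
                have h2 := norm_mul_le (A (σ • θ)) (A (σ • θ))
                have h3 := norm_mul_le (C (σ • θ)) (A (σ • θ))
                rw [norm_neg]; linarith
        have h4 : (0:ℝ) ≤ ‖A (σ • θ)‖ := norm_nonneg _
        have h5 : (0:ℝ) ≤ ‖C (σ • θ)‖ := norm_nonneg _
        nlinarith
      have hintF : IntervalIntegrable F MeasureTheory.volume 0 s₁ :=
        (contF.mono (by rw [Set.uIcc_of_le hs₁mem.1]; exact Set.Icc_subset_Icc le_rfl hs₁b.2)
          ).intervalIntegrable
      have hcontg : Continuous (fun σ : ℝ => M^2 + D * (M+1) * σ) :=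
        continuous_const.add (continuous_const.mul continuous_id)
      have hcontg2 : Continuous (fun σ : ℝ => D * (M+1) * σ) :=
        continuous_const.mul continuous_id
      have hintg : IntervalIntegrable (fun σ : ℝ => M^2 + D * (M+1) * σ)
          MeasureTheory.volume 0 s₁ := hcontg.intervalIntegrable 0 s₁
      have key : s₁ * M ≤ M^2 * s₁ + D * (M+1) * (s₁^2/2) := by
        have e1 : s₁ • A (s₁ • θ) = ∫ σ in (0:ℝ)..s₁, F σ := ftc s₁ hs₁b
        have e2 : ‖s₁ • A (s₁ • θ)‖ = s₁ * M := by
          rw [norm_smul s₁ (A (s₁ • θ)), Real.norm_eq_abs, abs_of_nonneg hs₁mem.1]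
        have e3 : ‖∫ σ in (0:ℝ)..s₁, F σ‖ ≤ ∫ σ in (0:ℝ)..s₁, ‖F σ‖ :=
          intervalIntegral.norm_integral_le_integral_norm hs₁mem.1
        have e4 : (∫ σ in (0:ℝ)..s₁, ‖F σ‖) ≤ ∫ σ in (0:ℝ)..s₁, (M^2 + D * (M+1) * σ) :=
          intervalIntegral.integral_mono_on hs₁mem.1 hintF.norm hintg hFbound
        have e5 : (∫ σ in (0:ℝ)..s₁, (M^2 + D * (M+1) * σ))
            = M^2 * s₁ + D * (M+1) * (s₁^2/2) := by
          rw [intervalIntegral.integral_add (intervalIntegrable_const)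
            (hcontg2.intervalIntegrable 0 s₁),
            intervalIntegral.integral_const, intervalIntegral.integral_const_mul,
            integral_id]
          simp only [smul_eq_mul, sub_zero]
          ring
        calc s₁ * M = ‖s₁ • A (s₁ • θ)‖ := e2.symm
          _ = ‖∫ σ in (0:ℝ)..s₁, F σ‖ := by rw [e1]
          _ ≤ ∫ σ in (0:ℝ)..s₁, ‖F σ‖ := e3
          _ ≤ ∫ σ in (0:ℝ)..s₁, (M^2 + D * (M+1) * σ) := e4
          _ = M^2 * s₁ + D * (M+1) * (s₁^2/2) := e5
      have hM12 : M ≤ 1/2 := hsmall s₁ ⟨hs₁mem.1, le_trans hs₁r hr.2⟩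
      have hDs : D * s₁ ≤ 1/10 := by
        have h1 : s₁ ≤ η := le_trans hs₁b.2 hbη.le
        have := Dη_le hD hηD
        nlinarith
      -- from key : s₁ M ≤ M² s₁ + D(M+1) s₁²/2 conclude M ≤ 2 D s₁
      have key2 : M ≤ M^2 + D*(M+1)*(s₁/2) := by nlinarith [h0, key]
      have p1 : M*M ≤ (1/2)*M := by nlinarith
      have p2 : D*s₁*M ≤ (1/10)*M := by nlinarith
      have hDs0 : 0 ≤ D * s₁ := mul_nonneg hD.le h0.le
      have hMfin : M ≤ 2 * D * s₁ := by nlinarith [key2, p1, p2, hDs0]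
      have : M ≤ 2 * D * r := by nlinarith
      linarith
  -- global bound on [0, b]
  obtain ⟨s₂, hs₂mem, hs₂max⟩ :=
    (isCompact_Icc : IsCompact (Set.Icc (0:ℝ) b)).exists_isMaxOn ⟨0, le_refl 0, hb0.le⟩
      contA.norm
  set Q : ℝ := ‖A (s₂ • θ)‖ with hQdef
  have hQ0 : 0 ≤ Q := norm_nonneg _
  refine ⟨max (2*D) (Q / r₀), le_max_of_le_left (by positivity), ?_⟩
  intro r hr
  by_cases hrr₀ : r ≤ r₀
  · have := slin r ⟨hr.1, hrr₀⟩
    have h2 : 2 * D * r ≤ max (2*D) (Q / r₀) * r :=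
      mul_le_mul_of_nonneg_right (le_max_left _ _) hr.1
    linarith
  · push_neg at hrr₀
    have h1 : ‖A (r • θ)‖ ≤ Q := hs₂max hr
    have h2 : Q = (Q / r₀) * r₀ := (div_mul_cancel₀ Q (ne_of_gt hr₀0)).symm
    have h3 : (Q / r₀) * r₀ ≤ (Q / r₀) * r :=
      mul_le_mul_of_nonneg_left hrr₀.le (by positivity)
    have h4 : (Q / r₀) * r ≤ max (2*D) (Q / r₀) * r :=
      mul_le_mul_of_nonneg_right (le_max_right _ _) (le_trans hr₀0.le hrr₀.le)
    linarith [h2 ▸ h1]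

end Aux

/-- Uniqueness for the canonical-coordinates ODE.  Let
`C : Bⁿ(η) → 𝕄^{n×n}` be continuous with `C(0) = 0` and `‖C(x)‖ ≤ D|x|`, where
`η ≤ (10D)⁻¹`.  If `A₁, A₂` are continuous on `Bⁿ(η)`, vanish at `0`, and both
satisfy `(d/dr)(r A(rθ)) = −A(rθ)² − C(rθ)A(rθ) − C(rθ)` for every unit vector
`θ` and `r ∈ (0, η)`, then `A₁ = A₂` on `Bⁿ(η)`.  (Matrices are modelled as
linear endomorphisms of `ℝⁿ` with the operator norm.) -/
theorem canonical_ODE_uniqueness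
    (n : ℕ) (η D : ℝ) (hη : 0 < η) (hD : 0 < D) (hηD : η ≤ (10 * D)⁻¹)
    (C A₁ A₂ : EuclideanSpace ℝ (Fin n) →
      (EuclideanSpace ℝ (Fin n) →L[ℝ] EuclideanSpace ℝ (Fin n)))
    (hCcont : ContinuousOn C (ball 0 η)) (hC0 : C 0 = 0)
    (hCbound : ∀ x ∈ ball (0 : EuclideanSpace ℝ (Fin n)) η, ‖C x‖ ≤ D * ‖x‖)
    (hA₁cont : ContinuousOn A₁ (ball 0 η)) (hA₁0 : A₁ 0 = 0)
    (hA₂cont : ContinuousOn A₂ (ball 0 η)) (hA₂0 : A₂ 0 = 0)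
    (hA₁ode : ∀ θ : EuclideanSpace ℝ (Fin n), ‖θ‖ = 1 →
      ∀ r ∈ Set.Ioo (0 : ℝ) η,
        HasDerivAt (fun ρ : ℝ => ρ • A₁ (ρ • θ))
          (-(A₁ (r • θ) * A₁ (r • θ)) - C (r • θ) * A₁ (r • θ) - C (r • θ)) r)
    (hA₂ode : ∀ θ : EuclideanSpace ℝ (Fin n), ‖θ‖ = 1 →
      ∀ r ∈ Set.Ioo (0 : ℝ) η,
        HasDerivAt (fun ρ : ℝ => ρ • A₂ (ρ • θ))
          (-(A₂ (r • θ) * A₂ (r • θ)) - C (r • θ) * A₂ (r • θ) - C (r • θ)) r) :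
    Set.EqOn A₁ A₂ (ball 0 η) := by
  intro x hx
  by_cases hx0 : x = 0
  · rw [hx0, hA₁0, hA₂0]
  -- setup
  set r : ℝ := ‖x‖ with hrdef
  set θ : EuclideanSpace ℝ (Fin n) := ‖x‖⁻¹ • x with hθdef
  have hr0 : 0 < r := norm_pos_iff.2 hx0
  have hrη : r < η := by rwa [mem_ball_zero_iff] at hx
  have hθ : ‖θ‖ = 1 := by
    rw [hθdef, norm_smul, Real.norm_eq_abs, abs_inv, abs_of_nonneg (norm_nonneg x)]
    field_simp
  have hxeq : ∀ t : ℝ, t = r → t • θ = x := by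
    intro t ht; rw [ht, hθdef, hrdef, smul_smul]
    rw [mul_inv_cancel₀ (norm_ne_zero_iff.2 hx0), one_smul]
  have hnorm : ∀ t : ℝ, 0 ≤ t → ‖t • θ‖ = t := by
    intro t ht; rw [norm_smul, hθ, mul_one, Real.norm_eq_abs, abs_of_nonneg ht]
  have hmem : ∀ t : ℝ, 0 ≤ t → t < η → t • θ ∈ ball (0 : EuclideanSpace ℝ (Fin n)) η := by
    intro t ht htη; rw [mem_ball_zero_iff, hnorm t ht]; exact htη
  -- linear bounds
  obtain ⟨K₁, hK₁0, hK₁⟩ := ode_linear_bound hη hD hηD hCcont hCbound hA₁cont hA₁0 hA₁ode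
    hθ hr0 hrη
  obtain ⟨K₂, hK₂0, hK₂⟩ := ode_linear_bound hη hD hηD hCcont hCbound hA₂cont hA₂0 hA₂ode
    hθ hr0 hrη
  -- Gronwall
  set f : ℝ → (EuclideanSpace ℝ (Fin n) →L[ℝ] EuclideanSpace ℝ (Fin n)) :=
    fun ρ => ρ • A₁ (ρ • θ) - ρ • A₂ (ρ • θ) with hfdef
  set g : ℝ → (EuclideanSpace ℝ (Fin n) →L[ℝ] EuclideanSpace ℝ (Fin n)) :=
    fun t => (-(A₁ (t • θ) * A₁ (t • θ)) - C (t • θ) * A₁ (t • θ) - C (t • θ))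
      - (-(A₂ (t • θ) * A₂ (t • θ)) - C (t • θ) * A₂ (t • θ) - C (t • θ)) with hgdef
  have hsmulc : Continuous (fun t : ℝ => t • θ) := continuous_id.smul continuous_const
  have hmaps : Set.MapsTo (fun t : ℝ => t • θ) (Set.Icc 0 r)
      (ball (0 : EuclideanSpace ℝ (Fin n)) η) :=
    fun t ht => hmem t ht.1 (lt_of_le_of_lt ht.2 hrη)
  have contA₁ : ContinuousOn (fun t : ℝ => A₁ (t • θ)) (Set.Icc 0 r) :=
    hA₁cont.comp hsmulc.continuousOn hmaps
  have contA₂ : ContinuousOn (fun t : ℝ => A₂ (t • θ)) (Set.Icc 0 r) :=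
    hA₂cont.comp hsmulc.continuousOn hmaps
  have hfc : ContinuousOn f (Set.Icc 0 r) :=
    (continuousOn_id.smul contA₁).sub (continuousOn_id.smul contA₂)
  have hf' : ∀ t ∈ Set.Ico (0:ℝ) r, HasDerivWithinAt f (g t) (Set.Ici t) t := by
    intro t ht
    rcases eq_or_lt_of_le ht.1 with h0 | h0
    · -- t = 0 : derivative is g 0 = 0
      subst h0
      have hg0 : g 0 = 0 := by
        simp [hgdef, zero_smul, hA₁0, hA₂0, hC0]
      rw [hg0]
      rw [hasDerivWithinAt_iff_tendsto_slope]
      have h1 : Filter.Tendsto (fun ρ : ℝ => A₁ (ρ • θ) - A₂ (ρ • θ))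
          (nhdsWithin 0 (Set.Icc 0 r)) (nhds 0) := by
        have h0mem : (0:ℝ) ∈ Set.Icc (0:ℝ) r := ⟨le_refl 0, hr0.le⟩
        have := (contA₁ 0 h0mem).sub (contA₂ 0 h0mem)
        exact (by simpa [ContinuousWithinAt, zero_smul, hA₁0, hA₂0] using this :
          Filter.Tendsto ((fun t : ℝ => A₁ (t • θ)) - fun t : ℝ => A₂ (t • θ))
            (nhdsWithin 0 (Set.Icc 0 r)) (nhds 0))
      have h2 : nhdsWithin (0:ℝ) (Set.Ici 0 \ {0}) ≤ nhdsWithin 0 (Set.Icc 0 r) := by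
        rw [nhdsWithin_le_iff]
        rw [mem_nhdsWithin]
        exact ⟨Set.Iio r, isOpen_Iio, hr0, fun y hy => ⟨hy.2.1, hy.1.le⟩⟩
      have h3 := h1.mono_left h2
      apply h3.congr'
      filter_upwards [self_mem_nhdsWithin] with ρ hρ
      have hρ0 : ρ ≠ 0 := hρ.2
      have hslope : slope f 0 ρ = A₁ (ρ • θ) - A₂ (ρ • θ) := by
        rw [slope_def_module]
        have hf00 : f 0 = 0 := by
          show (0:ℝ) • A₁ ((0:ℝ) • θ) - (0:ℝ) • A₂ ((0:ℝ) • θ) = 0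
          rw [zero_smul ℝ (A₁ ((0:ℝ) • θ)), zero_smul ℝ (A₂ ((0:ℝ) • θ)), sub_zero]
        rw [hf00, sub_zero, sub_zero]
        show ρ⁻¹ • (ρ • A₁ (ρ • θ) - ρ • A₂ (ρ • θ)) = _
        rw [← smul_sub ρ (A₁ (ρ • θ)) (A₂ (ρ • θ)),
          smul_smul ρ⁻¹ ρ (A₁ (ρ • θ) - A₂ (ρ • θ)), inv_mul_cancel₀ hρ0,
          one_smul ℝ (A₁ (ρ • θ) - A₂ (ρ • θ))]
      exact hslope.symm
    · -- t > 0
      exact ((hA₁ode θ hθ t ⟨h0, lt_trans ht.2 hrη⟩).sub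
        (hA₂ode θ hθ t ⟨h0, lt_trans ht.2 hrη⟩)).hasDerivWithinAt
  have hbound : ∀ t ∈ Set.Ico (0:ℝ) r, ‖g t‖ ≤ (K₁ + K₂ + D) * ‖f t‖ + 0 := by
    intro t ht
    have htIcc : t ∈ Set.Icc (0:ℝ) r := ⟨ht.1, ht.2.le⟩
    have ha₁ : ‖A₁ (t • θ)‖ ≤ K₁ * t := hK₁ t htIcc
    have ha₂ : ‖A₂ (t • θ)‖ ≤ K₂ * t := hK₂ t htIcc
    have hc : ‖C (t • θ)‖ ≤ D * t := by
      have := hCbound (t • θ) (hmem t ht.1 (lt_trans ht.2 hrη))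
      rwa [hnorm t ht.1] at this
    set Δ := A₁ (t • θ) - A₂ (t • θ) with hΔdef
    have hgeq : g t = -(A₁ (t • θ) * Δ) - Δ * A₂ (t • θ) - C (t • θ) * Δ :=
      ode_diff_eq _ _ _
    have hgle : ‖g t‖ ≤ (‖A₁ (t • θ)‖ + ‖A₂ (t • θ)‖ + ‖C (t • θ)‖) * ‖Δ‖ := by
      rw [hgeq]
      calc ‖-(A₁ (t • θ) * Δ) - Δ * A₂ (t • θ) - C (t • θ) * Δ‖
          ≤ ‖-(A₁ (t • θ) * Δ) - Δ * A₂ (t • θ)‖ + ‖C (t • θ) * Δ‖ := norm_sub_le _ _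
        _ ≤ ‖-(A₁ (t • θ) * Δ)‖ + ‖Δ * A₂ (t • θ)‖ + ‖C (t • θ) * Δ‖ := by
            have := norm_sub_le (-(A₁ (t • θ) * Δ)) (Δ * A₂ (t • θ)); linarith
        _ ≤ (‖A₁ (t • θ)‖ + ‖A₂ (t • θ)‖ + ‖C (t • θ)‖) * ‖Δ‖ := by
            have h1 := norm_mul_le (A₁ (t • θ)) Δ
            have h2 := norm_mul_le Δ (A₂ (t • θ))
            have h3 := norm_mul_le (C (t • θ)) Δ
            rw [norm_neg]; nlinarith [norm_nonneg Δ]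
    have hft : ‖f t‖ = t * ‖Δ‖ := by
      show ‖t • A₁ (t • θ) - t • A₂ (t • θ)‖ = t * ‖Δ‖
      rw [← smul_sub t (A₁ (t • θ)) (A₂ (t • θ)), norm_smul t (A₁ (t • θ) - A₂ (t • θ)),
        Real.norm_eq_abs, abs_of_nonneg ht.1]
    rw [hft, add_zero]
    have hΔ0 : (0:ℝ) ≤ ‖Δ‖ := norm_nonneg _
    have hsum : ‖A₁ (t • θ)‖ + ‖A₂ (t • θ)‖ + ‖C (t • θ)‖ ≤ (K₁ + K₂ + D) * t := by
      linarith
    have := mul_le_mul_of_nonneg_right hsum hΔ0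
    calc ‖g t‖ ≤ (‖A₁ (t • θ)‖ + ‖A₂ (t • θ)‖ + ‖C (t • θ)‖) * ‖Δ‖ := hgle
      _ ≤ (K₁ + K₂ + D) * t * ‖Δ‖ := this
      _ = (K₁ + K₂ + D) * (t * ‖Δ‖) := by ring
  have hfa : ‖f 0‖ ≤ 0 := by
    have hf00 : f 0 = 0 := by
      show (0:ℝ) • A₁ ((0:ℝ) • θ) - (0:ℝ) • A₂ ((0:ℝ) • θ) = 0
      rw [zero_smul ℝ (A₁ ((0:ℝ) • θ)), zero_smul ℝ (A₂ ((0:ℝ) • θ)), sub_zero]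
    rw [hf00, norm_zero]
  have hgr := norm_le_gronwallBound_of_norm_deriv_right_le hfc hf' hfa hbound r
    ⟨hr0.le, le_refl r⟩
  rw [sub_zero, gronwallBound_ε0_δ0] at hgr
  have hf0 : f r = 0 := norm_le_zero_iff.1 hgr
  have hxθ : r • θ = x := hxeq r rfl
  have hf0' : r • A₁ x - r • A₂ x = 0 := by
    have he : f r = r • A₁ (r • θ) - r • A₂ (r • θ) := rfl
    rw [he, hxθ] at hf0
    exact hf0
  have h9 : r • A₁ x = r • A₂ x := sub_eq_zero.1 hf0'
  exact smul_right_injective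
    (EuclideanSpace ℝ (Fin n) →L[ℝ] EuclideanSpace ℝ (Fin n)) (ne_of_gt hr0) h9
end

section
/- Existence and bounds for the canonical-coordinates ODE: let C ∈ C(B^n(η); 𝕄^{n×n}) with C(0) = 0 and ‖C(x)‖ ≤ D|x| for x ∈ B^n(η), where η ≤ (10D)⁻¹. Then there exists a continuous A : B^n(η) → 𝕄^{n×n} with A(0) = 0 satisfying (d/dr)(rA(rθ)) = −A(rθ)² − C(rθ)A(rθ) − C(rθ) in the integrated sense A(x) = ∫₀¹ [−A(sx)² − C(sx)A(sx) − C(sx)] ds, and this solution satisfies ‖A(x)‖ ≤ (5/8)D|x| and ‖A(x)‖ ≤ 1/16 for all x ∈ B^n(η). -/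
open Metric intervalIntegral MeasureTheory Set BoundedContinuousFunction
open scoped NNReal

section CanonicalAux

variable {E : Type*} [NormedAddCommGroup E] [NormedSpace ℝ E]

/-- clamp a real number to `[0,1]`. -/
noncomputable def canClamp (s : ℝ) : ℝ := (Set.projIcc (0:ℝ) 1 zero_le_one s : ℝ)

lemma canClamp_mem (s : ℝ) : canClamp s ∈ Set.Icc (0:ℝ) 1 :=
  (Set.projIcc (0:ℝ) 1 zero_le_one s).2

lemma canClamp_of_mem {s : ℝ} (hs : s ∈ Set.Icc (0:ℝ) 1) : canClamp s = s := by
  simp [canClamp, Set.projIcc_of_mem zero_le_one hs]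

lemma continuous_canClamp : Continuous canClamp :=
  continuous_subtype_val.comp continuous_projIcc

variable (η : ℝ)

/-- clamped scalar multiplication inside the ball. -/
noncomputable def canSmul (x : ↥(ball (0:E) η)) (s : ℝ) : ↥(ball (0:E) η) :=
  ⟨canClamp s • (x : E), by
    have hx : ‖(x : E)‖ < η := mem_ball_zero_iff.mp x.2
    have h1 := canClamp_mem s
    rw [mem_ball_zero_iff, norm_smul, Real.norm_eq_abs, abs_of_nonneg h1.1]
    nlinarith [norm_nonneg (x : E), h1.1, h1.2]⟩

lemma continuous_canSmul :
    Continuous (fun p : ↥(ball (0:E) η) × ℝ => canSmul η p.1 p.2) := by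
  apply Continuous.subtype_mk
  exact (continuous_canClamp.comp continuous_snd).smul
    (continuous_subtype_val.comp continuous_fst)

lemma norm_canSmul (x : ↥(ball (0:E) η)) {s : ℝ} (hs : s ∈ Set.Icc (0:ℝ) 1) :
    ‖((canSmul η x s : ↥(ball (0:E) η)) : E)‖ = s * ‖(x : E)‖ := by
  simp only [canSmul, norm_smul, Real.norm_eq_abs, canClamp_of_mem hs,
    abs_of_nonneg hs.1]

variable (C : E → (E →L[ℝ] E))

/-- The integrand of the fixed-point map. -/
noncomputable def canG (A : ↥(ball (0:E) η) →ᵇ (E →L[ℝ] E))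
    (x : ↥(ball (0:E) η)) (s : ℝ) : E →L[ℝ] E :=
  -(A (canSmul η x s) * A (canSmul η x s))
    - C (canSmul η x s) * A (canSmul η x s) - C (canSmul η x s)

lemma continuous_canG (hCcont : ContinuousOn C (ball 0 η))
    (A : ↥(ball (0:E) η) →ᵇ (E →L[ℝ] E)) :
    Continuous (fun p : ↥(ball (0:E) η) × ℝ => canG η C A p.1 p.2) := by
  have hCr : Continuous fun x : ↥(ball (0:E) η) => C x :=
    continuousOn_iff_continuous_restrict.mp hCcont
  have c1 : Continuous fun p : ↥(ball (0:E) η) × ℝ => A (canSmul η p.1 p.2) :=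
    A.continuous.comp (continuous_canSmul η)
  have c2 : Continuous fun p : ↥(ball (0:E) η) × ℝ => C (canSmul η p.1 p.2) :=
    hCr.comp (continuous_canSmul η)
  exact ((c1.mul c1).neg.sub (c2.mul c1)).sub c2

lemma continuous_canSmul_right (x : ↥(ball (0:E) η)) :
    Continuous (fun s : ℝ => canSmul η x s) := by
  apply Continuous.subtype_mk
  exact continuous_canClamp.smul continuous_const

lemma continuous_canG_right (hCcont : ContinuousOn C (ball 0 η))
    (A : ↥(ball (0:E) η) →ᵇ (E →L[ℝ] E)) (x : ↥(ball (0:E) η)) :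
    Continuous (fun s : ℝ => canG η C A x s) := by
  have hCr : Continuous fun x : ↥(ball (0:E) η) => C x :=
    continuousOn_iff_continuous_restrict.mp hCcont
  have cs := continuous_canSmul_right η x
  have c1 : Continuous fun s : ℝ => A (canSmul η x s) := A.continuous.comp cs
  have c2 : Continuous fun s : ℝ => C (canSmul η x s) := hCr.comp cs
  exact ((c1.mul c1).neg.sub (c2.mul c1)).sub c2


lemma norm_canG_triangle (A : ↥(ball (0:E) η) →ᵇ (E →L[ℝ] E))
    (x : ↥(ball (0:E) η)) (s : ℝ) :
    ‖canG η C A x s‖ ≤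
      ‖A (canSmul η x s)‖ * ‖A (canSmul η x s)‖
      + ‖C ((canSmul η x s : ↥(ball (0:E) η)) : E)‖ * ‖A (canSmul η x s)‖
      + ‖C ((canSmul η x s : ↥(ball (0:E) η)) : E)‖ := by
  set a := A (canSmul η x s) with ha
  set c := C ((canSmul η x s : ↥(ball (0:E) η)) : E) with hc
  have t1 := norm_sub_le (-(a * a) - c * a) c
  have t2 := norm_sub_le (-(a * a)) (c * a)
  rw [norm_neg] at t2
  have h2 := norm_mul_le a a
  have h3 := norm_mul_le c a
  calc ‖canG η C A x s‖ = ‖-(a * a) - c * a - c‖ := rfl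
    _ ≤ ‖-(a * a) - c * a‖ + ‖c‖ := t1
    _ ≤ ‖a‖ * ‖a‖ + ‖c‖ * ‖a‖ + ‖c‖ := by linarith

lemma norm_canG_le (h10 : ∀ y : ↥(ball (0:E) η), ‖C (y : E)‖ ≤ 1 / 10)
    (A : ↥(ball (0:E) η) →ᵇ (E →L[ℝ] E)) (x : ↥(ball (0:E) η)) (s : ℝ) :
    ‖canG η C A x s‖ ≤ ‖A‖ ^ 2 + (1 / 10) * ‖A‖ + 1 / 10 := by
  have h1 := norm_canG_triangle η C A x s
  have hna : ‖A (canSmul η x s)‖ ≤ ‖A‖ := A.norm_coe_le_norm _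
  have hnc : ‖C ((canSmul η x s : ↥(ball (0:E) η)) : E)‖ ≤ 1 / 10 := h10 _
  nlinarith [norm_nonneg (A (canSmul η x s)),
    norm_nonneg (C ((canSmul η x s : ↥(ball (0:E) η)) : E)), norm_nonneg A]

/-- The fixed point map. -/
noncomputable def canT [CompleteSpace E] (hCcont : ContinuousOn C (ball 0 η))
    (h10 : ∀ y : ↥(ball (0:E) η), ‖C (y : E)‖ ≤ 1 / 10)
    (A : ↥(ball (0:E) η) →ᵇ (E →L[ℝ] E)) : ↥(ball (0:E) η) →ᵇ (E →L[ℝ] E) :=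
  BoundedContinuousFunction.ofNormedAddCommGroup
    (fun x => ∫ s in (0:ℝ)..1, canG η C A x s)
    (intervalIntegral.continuous_parametric_intervalIntegral_of_continuous'
      (f := fun x s => canG η C A x s)
      (by have := continuous_canG η C hCcont A; exact this) 0 1)
    (‖A‖ ^ 2 + (1 / 10) * ‖A‖ + 1 / 10)
    (fun x => by
      have h := intervalIntegral.norm_integral_le_of_norm_le_const
        (a := 0) (b := 1) (f := fun s => canG η C A x s)
        (fun s _ => norm_canG_le η C h10 A x s)
      simp only [sub_zero, abs_one, mul_one] at h
      exact h)

lemma canT_apply [CompleteSpace E] (hCcont : ContinuousOn C (ball 0 η))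
    (h10 : ∀ y : ↥(ball (0:E) η), ‖C (y : E)‖ ≤ 1 / 10)
    (A : ↥(ball (0:E) η) →ᵇ (E →L[ℝ] E)) (x : ↥(ball (0:E) η)) :
    canT η C hCcont h10 A x = ∫ s in (0:ℝ)..1, canG η C A x s := rfl


lemma canG_intervalIntegrable (hCcont : ContinuousOn C (ball 0 η))
    (A : ↥(ball (0:E) η) →ᵇ (E →L[ℝ] E)) (x : ↥(ball (0:E) η)) :
    IntervalIntegrable (canG η C A x) volume 0 1 :=
  (continuous_canG_right η C hCcont A x).intervalIntegrable 0 1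

/-- The invariant set. -/
def canS (η D : ℝ) : Set (↥(ball (0:E) η) →ᵇ (E →L[ℝ] E)) :=
  {A | ∀ x : ↥(ball (0:E) η), ‖A x‖ ≤ 5 / 8 * D * ‖(x : E)‖}

lemma mem_canS {η D : ℝ} {A : ↥(ball (0:E) η) →ᵇ (E →L[ℝ] E)} :
    A ∈ canS η D ↔ ∀ x : ↥(ball (0:E) η), ‖A x‖ ≤ 5 / 8 * D * ‖(x : E)‖ := Iff.rfl

lemma isClosed_canS (η D : ℝ) : IsClosed (canS (E := E) η D) := by
  have : canS (E := E) η D =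
      ⋂ x : ↥(ball (0:E) η),
        {A : ↥(ball (0:E) η) →ᵇ (E →L[ℝ] E) | ‖A x‖ ≤ 5 / 8 * D * ‖(x : E)‖} := by
    ext A; simp [canS, Set.mem_iInter]
  rw [this]
  exact isClosed_iInter fun x => isClosed_le
    (continuous_norm.comp (continuous_eval_const x)) continuous_const

end CanonicalAux

set_option maxHeartbeats 1000000 in
lemma aux_canonical {E : Type*} [NormedAddCommGroup E] [NormedSpace ℝ E] [CompleteSpace E]
    (η D : ℝ) (hη : 0 < η) (hD : 0 < D) (hηD : η ≤ (10 * D)⁻¹)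
    (C : E → (E →L[ℝ] E)) (hCcont : ContinuousOn C (ball 0 η))
    (hCbound : ∀ x ∈ ball (0 : E) η, ‖C x‖ ≤ D * ‖x‖) :
    ∃ A : E → (E →L[ℝ] E), ContinuousOn A (ball 0 η) ∧ A 0 = 0 ∧
      (∀ x ∈ ball (0 : E) η, A x = ∫ s in (0:ℝ)..1,
        (-(A (s • x) * A (s • x)) - C (s • x) * A (s • x) - C (s • x))) ∧
      (∀ x ∈ ball (0 : E) η, ‖A x‖ ≤ (5 / 8) * D * ‖x‖ ∧ ‖A x‖ ≤ 1 / 16) := by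
  classical
  have hDη : D * η ≤ 1 / 10 := by
    rw [inv_eq_one_div, le_div_iff₀ (by positivity)] at hηD
    linarith
  have hball : ∀ y : ↥(ball (0:E) η), ‖(y : E)‖ < η := fun y => mem_ball_zero_iff.mp y.2
  have hCb : ∀ y : ↥(ball (0:E) η), ‖C (y : E)‖ ≤ D * ‖(y : E)‖ := fun y => hCbound y y.2
  have h10 : ∀ y : ↥(ball (0:E) η), ‖C (y : E)‖ ≤ 1 / 10 := by
    intro y
    nlinarith [hCb y, hball y, norm_nonneg (C (y : E)), norm_nonneg (y : E)]
  have hSnorm : ∀ A ∈ canS (E := E) η D, ∀ y : ↥(ball (0:E) η), ‖A y‖ ≤ 1 / 16 := by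
    intro A hA y
    have h1 := (mem_canS.mp hA) y
    nlinarith [hball y, norm_nonneg (y : E)]
  -- pointwise weighted bound for A ∈ S
  have hGnormS : ∀ A ∈ canS (E := E) η D, ∀ x : ↥(ball (0:E) η), ∀ s ∈ Set.Icc (0:ℝ) 1,
      ‖canG η C A x s‖ ≤
        ((5/8*D)^2 + D*(5/8*D)) * ‖(x : E)‖^2 * s^2 + D * ‖(x : E)‖ * s := by
    intro A hA x s hs
    have htr := norm_canG_triangle η C A x s
    have hy : ‖((canSmul η x s : ↥(ball (0:E) η)) : E)‖ = s * ‖(x : E)‖ := norm_canSmul η x hs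
    have ha : ‖A (canSmul η x s)‖ ≤ 5/8*D*(s*‖(x : E)‖) := by
      have := (mem_canS.mp hA) (canSmul η x s); rwa [hy] at this
    have hc : ‖C ((canSmul η x s : ↥(ball (0:E) η)) : E)‖ ≤ D*(s*‖(x : E)‖) := by
      have := hCb (canSmul η x s); rwa [hy] at this
    nlinarith [norm_nonneg (A (canSmul η x s)),
      norm_nonneg (C ((canSmul η x s : ↥(ball (0:E) η)) : E)), hs.1, hs.2,
      norm_nonneg (x : E), mul_nonneg hs.1 (norm_nonneg (x : E))]
  -- invariance
  have hmaps : Set.MapsTo (canT η C hCcont h10) (canS (E := E) η D) (canS (E := E) η D) := by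
    intro A hA
    rw [mem_canS]
    intro x
    rw [canT_apply]
    set c1 : ℝ := ((5/8*D)^2 + D*(5/8*D)) * ‖(x : E)‖^2 with hc1
    set c2 : ℝ := D * ‖(x : E)‖ with hc2
    have hae : ∀ᵐ t ∂(volume.restrict (Set.uIoc (0:ℝ) 1)),
        ‖canG η C A x t‖ ≤ c1 * t^2 + c2 * t := by
      rw [Set.uIoc_of_le zero_le_one, ae_restrict_iff' measurableSet_Ioc]
      filter_upwards with s hs
      have := hGnormS A hA x s (Set.Ioc_subset_Icc_self hs)
      calc ‖canG η C A x s‖ ≤ _ := this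
        _ = c1 * s^2 + c2 * s := by ring
    have hbint : IntervalIntegrable (fun s : ℝ => c1 * s^2 + c2 * s) volume 0 1 :=
      (Continuous.intervalIntegrable (by continuity) 0 1)
    have hb := intervalIntegral.norm_integral_le_abs_of_norm_le hae hbint
    have hint : ∫ s in (0:ℝ)..1, (c1 * s^2 + c2 * s) = c1/3 + c2/2 := by
      have h1 : IntervalIntegrable (fun s : ℝ => c1 * s^2) volume 0 1 :=
        Continuous.intervalIntegrable (by continuity) 0 1
      have h2 : IntervalIntegrable (fun s : ℝ => c2 * s) volume 0 1 :=
        Continuous.intervalIntegrable (by continuity) 0 1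
      rw [intervalIntegral.integral_add h1 h2, intervalIntegral.integral_const_mul,
        intervalIntegral.integral_const_mul, integral_pow, integral_id]
      ring
    rw [hint] at hb
    have hc1n : 0 ≤ c1 := by positivity
    have hc2n : 0 ≤ c2 := by positivity
    have habs : |c1/3 + c2/2| = c1/3 + c2/2 := abs_of_nonneg (by linarith)
    rw [habs] at hb
    have hxη : ‖(x : E)‖ < η := hball x
    have hDt : D * ‖(x : E)‖ ≤ 1/10 := by nlinarith [norm_nonneg (x : E)]
    have hfin : c1/3 + c2/2 ≤ 5/8 * D * ‖(x : E)‖ := by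
      rw [hc1, hc2]
      nlinarith [norm_nonneg (x : E), mul_nonneg hD.le (norm_nonneg (x : E)),
        mul_nonneg (by linarith : (0:ℝ) ≤ 1/10 - D * ‖(x : E)‖)
          (mul_nonneg hD.le (norm_nonneg (x : E)))]
    linarith
  -- contraction on S
  have hcontr : ContractingWith (9/40 : ℝ≥0) (hmaps.restrict _ _ _) := by
    constructor
    · rw [← NNReal.coe_lt_coe]; norm_num
    · apply LipschitzWith.of_dist_le_mul
      rintro ⟨A, hA⟩ ⟨B, hB⟩
      have hcoe : ((9/40 : ℝ≥0) : ℝ) = 9/40 := by norm_num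
      rw [Subtype.dist_eq, Subtype.dist_eq, MapsTo.val_restrict_apply,
        MapsTo.val_restrict_apply, hcoe]
      have hd : 0 ≤ (9:ℝ)/40 * dist A B := by positivity
      rw [BoundedContinuousFunction.dist_le hd]
      intro x
      rw [dist_eq_norm, canT_apply, canT_apply,
        ← intervalIntegral.integral_sub (canG_intervalIntegrable η C hCcont A x)
          (canG_intervalIntegrable η C hCcont B x)]
      have hb := intervalIntegral.norm_integral_le_of_norm_le_const
        (a := 0) (b := 1) (C := 9/40 * dist A B)
        (f := fun s => canG η C A x s - canG η C B x s) ?_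
      · simpa using hb
      · intro s hs
        rw [Set.uIoc_of_le zero_le_one] at hs
        have hs' : s ∈ Set.Icc (0:ℝ) 1 := Set.Ioc_subset_Icc_self hs
        set y := canSmul η x s with hydef
        set a := A y with hadef
        set b := B y with hbdef
        set c := C ((y : ↥(ball (0:E) η)) : E) with hcdef
        have hab : ‖a - b‖ ≤ dist A B := by
          rw [← dist_eq_norm]; exact BoundedContinuousFunction.dist_coe_le_dist y
        have hna : ‖a‖ ≤ 1/16 := hSnorm A hA y
        have hnb : ‖b‖ ≤ 1/16 := hSnorm B hB y
        have hnc : ‖c‖ ≤ 1/10 := h10 y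
        have hid : canG η C A x s - canG η C B x s
            = -(a*(a-b)) - (a-b)*b - c*(a-b) := by
          simp only [canG, ← hydef, ← hadef, ← hbdef, ← hcdef]
          noncomm_ring
        show ‖canG η C A x s - canG η C B x s‖ ≤ 9/40 * dist A B
        rw [hid]
        have t1 := norm_sub_le (-(a*(a-b)) - (a-b)*b) (c*(a-b))
        have t2 := norm_sub_le (-(a*(a-b))) ((a-b)*b)
        rw [norm_neg] at t2
        have m1 := norm_mul_le a (a-b)
        have m2 := norm_mul_le (a-b) b
        have m3 := norm_mul_le c (a-b)
        have hdist : (0:ℝ) ≤ dist A B := dist_nonneg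
        nlinarith [norm_nonneg (a-b), norm_nonneg a, norm_nonneg b, norm_nonneg c]
  -- fixed point
  have h0S : (0 : ↥(ball (0:E) η) →ᵇ (E →L[ℝ] E)) ∈ canS (E := E) η D := by
    rw [mem_canS]; intro x; simp; positivity
  obtain ⟨g, hgS, hgfix, -, -⟩ :=
    ContractingWith.exists_fixedPoint' (isClosed_canS η D).isComplete hmaps hcontr h0S
      (edist_ne_top _ _)
  have hgfix' : canT η C hCcont h10 g = g := hgfix
  have hg : ∀ x : ↥(ball (0:E) η), g x = ∫ s in (0:ℝ)..1, canG η C g x s := by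
    intro x
    have h := canT_apply η C hCcont h10 g x
    rw [hgfix'] at h
    exact h
  have hgSn := mem_canS.mp hgS
  refine ⟨fun x => if h : x ∈ ball (0:E) η then g ⟨x, h⟩ else 0, ?_, ?_, ?_, ?_⟩
  · rw [continuousOn_iff_continuous_restrict]
    have hres : (ball (0:E) η).domRestrict
        (fun x => if h : x ∈ ball (0:E) η then g ⟨x, h⟩ else 0) = ⇑g := by
      funext y
      exact dif_pos y.2
    rw [hres]
    exact g.continuous
  · have h0 : (0:E) ∈ ball (0:E) η := mem_ball_self hη
    simp only [dif_pos h0]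
    have := hgSn ⟨0, h0⟩
    simp only [Subtype.coe_mk, norm_zero, mul_zero] at this
    exact norm_le_zero_iff.mp this
  · intro x hx
    simp only [dif_pos hx]
    rw [hg ⟨x, hx⟩]
    apply intervalIntegral.integral_congr
    intro s hs
    rw [Set.uIcc_of_le zero_le_one] at hs
    have hval : ((canSmul η (⟨x, hx⟩ : ↥(ball (0:E) η)) s : ↥(ball (0:E) η)) : E) = s • x := by
      simp [canSmul, canClamp_of_mem hs]
    have hmem' : s • x ∈ ball (0:E) η := hval ▸ (canSmul η (⟨x, hx⟩ : ↥(ball (0:E) η)) s).2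
    have hy : canSmul η (⟨x, hx⟩ : ↥(ball (0:E) η)) s = ⟨s • x, hmem'⟩ := Subtype.ext hval
    simp only [canG, hy, dif_pos hmem']
  · intro x hx
    simp only [dif_pos hx]
    have h1 := hgSn ⟨x, hx⟩
    have hxn : ‖x‖ < η := mem_ball_zero_iff.mp hx
    constructor
    · calc ‖g ⟨x, hx⟩‖ ≤ 5/8 * D * ‖x‖ := h1
        _ = (5/8) * D * ‖x‖ := by ring
    · nlinarith [norm_nonneg x]

/-- Existence and bounds for the canonical-coordinates ODE.  Let
`C : Bⁿ(η) → 𝕄^{n×n}` be continuous with `C(0) = 0` and `‖C(x)‖ ≤ D|x|`, where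
`η ≤ (10D)⁻¹`.  Then there is a continuous `A : Bⁿ(η) → 𝕄^{n×n}` with `A(0) = 0`
satisfying the ODE in the integrated form
`A(x) = ∫₀¹ [−A(sx)² − C(sx)A(sx) − C(sx)] ds`, and moreover
`‖A(x)‖ ≤ (5/8) D |x|` and `‖A(x)‖ ≤ 1/16` on `Bⁿ(η)`. -/
theorem canonical_ODE_existence
    (n : ℕ) (η D : ℝ) (hη : 0 < η) (hD : 0 < D) (hηD : η ≤ (10 * D)⁻¹)
    (C : EuclideanSpace ℝ (Fin n) →
      (EuclideanSpace ℝ (Fin n) →L[ℝ] EuclideanSpace ℝ (Fin n)))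
    (hCcont : ContinuousOn C (ball 0 η)) (hC0 : C 0 = 0)
    (hCbound : ∀ x ∈ ball (0 : EuclideanSpace ℝ (Fin n)) η, ‖C x‖ ≤ D * ‖x‖) :
    ∃ A : EuclideanSpace ℝ (Fin n) →
      (EuclideanSpace ℝ (Fin n) →L[ℝ] EuclideanSpace ℝ (Fin n)),
      ContinuousOn A (ball 0 η) ∧ A 0 = 0 ∧
      (∀ x ∈ ball (0 : EuclideanSpace ℝ (Fin n)) η,
        A x = ∫ s in (0:ℝ)..1,
          (-(A (s • x) * A (s • x)) - C (s • x) * A (s • x) - C (s • x))) ∧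
      (∀ x ∈ ball (0 : EuclideanSpace ℝ (Fin n)) η,
        ‖A x‖ ≤ (5 / 8) * D * ‖x‖ ∧ ‖A x‖ ≤ 1 / 16) :=
  aux_canonical η D hη hD hηD C hCcont hCbound
end

section
/- Non-self-intersection of flows of small vector fields: there exists δ > 0 depending only on n such that the following holds. If Z is a C¹ vector field on an open set V ⊆ ℝⁿ with ‖Z‖_{C¹(V;ℝⁿ)} ≤ δ, then there does not exist x ∈ V with e^{tZ}x ∈ V for all t ∈ [0,1], e^{Z}x = x, and Z(x) ≠ 0. In other words, the time-one flow of a sufficiently small C¹ vector field has no nontrivial fixed points along trajectories that remain in V. -/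
open Set

/-- Non-self-intersection of flows of small vector fields.  There
is a `δ > 0` depending only on `n` such that: if `Z` is a `C¹` vector field on
an open set `V ⊆ ℝⁿ` with `‖Z‖_{C¹(V;ℝⁿ)} ≤ δ`, and `γ` is an integral curve of
`Z` on `[0,1]` staying in `V` with `γ(0) = γ(1) = x` (i.e. `e^{Z}x = x` with
`e^{tZ}x ∈ V` for all `t ∈ [0,1]`), then `Z(x) = 0`. -/
theorem no_periodic_orbit_of_small_C1
    (n : ℕ) :
    ∃ δ : ℝ, 0 < δ ∧
      ∀ (V : Set (EuclideanSpace ℝ (Fin n))), IsOpen V →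
      ∀ Z : EuclideanSpace ℝ (Fin n) → EuclideanSpace ℝ (Fin n),
        ContDiffOn ℝ 1 Z V →
        (∀ x ∈ V, ‖Z x‖ ≤ δ) →
        (∀ x ∈ V, ‖fderiv ℝ Z x‖ ≤ δ) →
        ∀ (γ : ℝ → EuclideanSpace ℝ (Fin n)) (x : EuclideanSpace ℝ (Fin n)),
          (∀ t ∈ Icc (0 : ℝ) 1, γ t ∈ V) →
          (∀ t ∈ Icc (0 : ℝ) 1, HasDerivAt γ (Z (γ t)) t) →
          γ 0 = x → γ 1 = x → Z x = 0 := by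
  refine ⟨1/4, by norm_num, fun V hV Z hZ hZ0 hZ1 γ x hγV hγ' h0 h1 => ?_⟩
  set f : ℝ → EuclideanSpace ℝ (Fin n) := fun t => Z (γ t) with hf
  -- derivative of f along the curve
  have hfderiv : ∀ t ∈ Icc (0:ℝ) 1,
      HasDerivAt f ((fderiv ℝ Z (γ t)) (Z (γ t))) t := by
    intro t ht
    have hd : DifferentiableAt ℝ Z (γ t) := by
      have := (hZ.contDiffAt (hV.mem_nhds (hγV t ht)))
      exact this.differentiableAt one_ne_zero
    exact hd.hasFDerivAt.comp_hasDerivAt t (hγ' t ht)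
  -- f is continuous on Icc 0 1
  have hfc : ContinuousOn f (Icc 0 1) := fun t ht =>
    ((hfderiv t ht).continuousAt).continuousWithinAt
  -- supremum of ‖f‖ on Icc 0 1
  obtain ⟨t0, ht0, hmax⟩ := (isCompact_Icc (a := (0:ℝ)) (b := 1)).exists_isMaxOn
    ⟨0, by norm_num⟩ (hfc.norm)
  set S := ‖f t0‖ with hS
  have hS0 : 0 ≤ S := norm_nonneg _
  -- bound on derivative of f
  have hder_bound : ∀ t ∈ Icc (0:ℝ) 1, ‖(fderiv ℝ Z (γ t)) (Z (γ t))‖ ≤ (1/4) * S := by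
    intro t ht
    calc ‖(fderiv ℝ Z (γ t)) (Z (γ t))‖ ≤ ‖fderiv ℝ Z (γ t)‖ * ‖Z (γ t)‖ :=
          (fderiv ℝ Z (γ t)).le_opNorm _
      _ ≤ (1/4) * S := by
          apply mul_le_mul (hZ1 _ (hγV t ht)) (hmax ht) (norm_nonneg _) (by norm_num)
  -- mean value: ‖f t - f 0‖ ≤ (1/4) S
  have hfvar : ∀ t ∈ Icc (0:ℝ) 1, ‖f t - f 0‖ ≤ (1/4) * S := by
    intro t ht
    have := (convex_Icc (0:ℝ) 1).norm_image_sub_le_of_norm_hasDerivWithin_le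
      (f' := fun t => (fderiv ℝ Z (γ t)) (Z (γ t)))
      (fun s hs => (hfderiv s hs).hasDerivWithinAt) hder_bound
      (by norm_num : (0:ℝ) ∈ Icc (0:ℝ) 1) ht
    calc ‖f t - f 0‖ ≤ (1/4) * S * ‖t - 0‖ := this
      _ ≤ (1/4) * S * 1 := by
          apply mul_le_mul_of_nonneg_left _ (by positivity)
          rw [sub_zero, Real.norm_eq_abs, abs_of_nonneg ht.1]; exact ht.2
      _ = (1/4) * S := mul_one _
  have hfx : f 0 = Z x := by simp [hf, h0]
  set M := ‖Z x‖ with hM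
  -- S ≤ M + (1/4) S
  have hSM : S ≤ M + (1/4) * S := by
    have := hfvar t0 ht0
    have h' : ‖f t0‖ - ‖f 0‖ ≤ ‖f t0 - f 0‖ := norm_sub_norm_le _ _
    rw [hfx] at h' this
    linarith
  -- the shifted curve h t = γ t - t • Z x
  have hh : ∀ t ∈ Icc (0:ℝ) 1,
      HasDerivAt (fun t => γ t - t • Z x) (f t - f 0) t := by
    intro t ht
    rw [hfx]
    have hs : HasDerivAt (fun t : ℝ => t • Z x) (Z x) t := by
      simpa using (hasDerivAt_id t).smul_const (Z x)
    exact (hγ' t ht).sub hs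
  have hMS : M ≤ (1/4) * S := by
    have hmv := (convex_Icc (0:ℝ) 1).norm_image_sub_le_of_norm_hasDerivWithin_le
      (f := fun t => γ t - t • Z x) (f' := fun t => f t - f 0)
      (fun s hs => (hh s hs).hasDerivWithinAt)
      (fun s hs => by
        calc ‖f s - f 0‖ ≤ (1/4) * S := hfvar s hs)
      (by norm_num : (0:ℝ) ∈ Icc (0:ℝ) 1) (by norm_num : (1:ℝ) ∈ Icc (0:ℝ) 1)
    have : ‖(γ 1 - (1:ℝ) • Z x) - (γ 0 - (0:ℝ) • Z x)‖ ≤ (1/4) * S * ‖(1:ℝ) - 0‖ := hmv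
    simp only [one_smul, zero_smul, sub_zero, h0, h1] at this
    have heq : x - Z x - x = -(Z x) := by abel
    rw [heq, norm_neg] at this
    simpa using this
  have : M = 0 := by linarith
  exact norm_eq_zero.mp this
end
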